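/- Let n ≥ 3. Let N be the normal closure in the Artin group A(Ã_{n-1}) of the single element (a_n·a_{n-1}⋯a_1 · a_n·a_{n-1}⋯a_3)·(a_{n-1}·a_{n-2}⋯a_1 · a_n·a_{n-1}⋯a_2)⁻¹ (the cycle relation). Then the quotient A(Ã_{n-1})/N is isomorphic to the Artin group A(D_n); moreover, an explicit isomorphism A(D_n) → A(Ã_{n-1})/N is given by sending the generator u_1 to the class of (a_n·a_{n-1}⋯a_3)⁻¹·a_1·(a_n·a_{n-1}⋯a_3) and the generator u_i to the class of a_i for 2 ≤ i ≤ n. -/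

import Mathlib

namespace Stmt4

/-- The braid relator `x y x (y x y)⁻¹` (weight 3). -/
def braidRel {γ : Type} (x y : FreeGroup γ) : FreeGroup γ := x * y * x * (y * x * y)⁻¹

/-- The commutation relator `x y (y x)⁻¹` (weight 2). -/
def commRel {γ : Type} (x y : FreeGroup γ) : FreeGroup γ := x * y * (y * x)⁻¹

/-- Relations of the Artin group `A(Ã_{n-1})`: the generator indexed by `i : Fin n`
is `a_{i+1}`; cyclically adjacent generators braid, all other pairs commute. -/
def AtildeRels (n : ℕ) : Set (FreeGroup (Fin n)) :=
  { r | ∃ i j : Fin n,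
      ((j : ℕ) = ((i : ℕ) + 1) % n ∧ r = braidRel (.of i) (.of j)) ∨
      (i ≠ j ∧ (j : ℕ) ≠ ((i : ℕ) + 1) % n ∧ (i : ℕ) ≠ ((j : ℕ) + 1) % n ∧
        r = commRel (.of i) (.of j)) }

/-- The Artin group `A(Ã_{n-1})`. -/
abbrev Atilde (n : ℕ) : Type := PresentedGroup (AtildeRels n)

/-- The standard generator `a_i` (for `1 ≤ i ≤ n`) of `A(Ã_{n-1})`. -/
def a (n : ℕ) (i : ℕ) : Atilde n :=
  if h : 0 < n then PresentedGroup.of ⟨(i - 1) % n, Nat.mod_lt _ h⟩ else 1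

/-- The descending product `a_m · a_{m-1} ⋯ a_k` in `A(Ã_{n-1})`. -/
def dprod (n : ℕ) (k m : ℕ) : Atilde n :=
  ((List.range' k (m + 1 - k)).reverse.map (a n)).prod

/-- Relations of the Artin group `A(D_n)`: the generator indexed by `i : Fin n`
is `u_{i+1}`; the braid relation holds for the pair `{u_1, u_3}` and the pairs
`{u_i, u_{i+1}}` with `2 ≤ i ≤ n-1`, all remaining pairs commute. -/
def DnRels (n : ℕ) : Set (FreeGroup (Fin n)) :=
  { r | ∃ i j : Fin n,
      (((i : ℕ) = 0 ∧ (j : ℕ) = 2) ∧ r = braidRel (.of i) (.of j)) ∨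
      ((1 ≤ (i : ℕ) ∧ (j : ℕ) = (i : ℕ) + 1) ∧ r = braidRel (.of i) (.of j)) ∨
      ((i : ℕ) < (j : ℕ) ∧ ¬((i : ℕ) = 0 ∧ (j : ℕ) = 2) ∧
        ¬(1 ≤ (i : ℕ) ∧ (j : ℕ) = (i : ℕ) + 1) ∧ r = commRel (.of i) (.of j)) }

/-- The Artin group `A(D_n)`. -/
abbrev ArtinD (n : ℕ) : Type := PresentedGroup (DnRels n)

/-- The standard generator `u_i` (for `1 ≤ i ≤ n`) of `A(D_n)`. -/
def u (n : ℕ) (i : ℕ) : ArtinD n :=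
  if h : 0 < n then PresentedGroup.of ⟨(i - 1) % n, Nat.mod_lt _ h⟩ else 1

/-- The cycle relator
`(a_n ⋯ a_1 · a_n ⋯ a_3) · (a_{n-1} ⋯ a_1 · a_n ⋯ a_2)⁻¹` in `A(Ã_{n-1})`. -/
def cycleRelator (n : ℕ) : Atilde n :=
  (dprod n 1 n * dprod n 3 n) * (dprod n 1 (n - 1) * dprod n 2 n)⁻¹


end Stmt4

set_option linter.unusedSectionVars false
set_option maxHeartbeats 1000000

namespace Stmt4Aux

variable {G : Type*} [Group G]

/-- Descending product `b m * b (m-1) * ⋯ * b k`. -/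
def Dp (b : ℕ → G) (k m : ℕ) : G := ((List.range' k (m + 1 - k)).reverse.map b).prod

lemma Dp_empty (b : ℕ → G) {k m : ℕ} (h : m + 1 ≤ k) : Dp b k m = 1 := by
  unfold Dp
  rw [Nat.sub_eq_zero_of_le h]
  simp

lemma Dp_top (b : ℕ → G) {k m : ℕ} (h1 : 1 ≤ m) (h : k ≤ m) :
    Dp b k m = b m * Dp b k (m - 1) := by
  unfold Dp
  have e1 : m + 1 - k = (m - k) + 1 := by omega
  have e2 : (m - 1) + 1 - k = m - k := by omega
  rw [e1, e2, List.range'_concat]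
  have e3 : k + 1 * (m - k) = m := by omega
  rw [e3]
  simp

lemma Dp_top' (b : ℕ → G) {k m : ℕ} (h : k ≤ m + 1) :
    Dp b k (m + 1) = b (m + 1) * Dp b k m := by
  rw [Dp_top b (by omega) (by omega), Nat.add_sub_cancel]

lemma Dp_bot (b : ℕ → G) {k m : ℕ} (h : k ≤ m) : Dp b k m = Dp b (k + 1) m * b k := by
  unfold Dp
  have e1 : m + 1 - k = (m - k) + 1 := by omega
  have e2 : m + 1 - (k + 1) = m - k := by omega
  rw [e1, e2, List.range'_succ]
  simp

lemma Dp_single (b : ℕ → G) (k : ℕ) : Dp b k k = b k := by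
  unfold Dp
  rw [Nat.succ_sub (le_refl k), Nat.sub_self]
  simp

lemma commute_Dp {b : ℕ → G} {x : G} {k m : ℕ}
    (h : ∀ i, k ≤ i → i ≤ m → Commute x (b i)) : Commute x (Dp b k m) := by
  unfold Dp
  apply Commute.list_prod_right
  intro y hy
  simp only [List.mem_map, List.mem_reverse, List.mem_range'] at hy
  obtain ⟨i, ⟨j, hj, rfl⟩, rfl⟩ := hy
  exact h _ (by omega) (by omega)

lemma Dp_congr {b b' : ℕ → G} {k m : ℕ}
    (h : ∀ i, k ≤ i → i ≤ m → b i = b' i) : Dp b k m = Dp b' k m := by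
  unfold Dp
  congr 1
  apply List.map_congr_left
  intro i hi
  simp only [List.mem_reverse, List.mem_range'] at hi
  obtain ⟨j, hj, rfl⟩ := hi
  exact h _ (by omega) (by omega)

lemma map_Dp {H : Type*} [Group H] (F : G →* H) (b : ℕ → G) (k m : ℕ) :
    F (Dp b k m) = Dp (fun i => F (b i)) k m := by
  unfold Dp
  rw [map_list_prod, List.map_map]
  rfl

/-- Chain shift. -/
lemma chain_shift (b : ℕ → G) (M : ℕ) :
    ∀ d k, (∀ i, k ≤ i → i + 1 ≤ M → b (i+1) * b i * b (i+1) = b i * b (i+1) * b i) →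
    (∀ i j, k ≤ i → i + 2 ≤ j → j ≤ M → Commute (b i) (b j)) →
    k + d + 1 ≤ M →
    Dp b k M * b (k + d + 1) = b (k + d) * Dp b k M := by
  intro d
  induction d with
  | zero =>
    intro k Hb Hc h
    show Dp b k M * b (k + 1) = b k * Dp b k M
    have e1 : Dp b k M = Dp b (k+2) M * b (k+1) * b k := by
      rw [Dp_bot b (show k ≤ M by omega), Dp_bot b (show k+1 ≤ M by omega)]
    have hcomm : Commute (b k) (Dp b (k+2) M) :=
      commute_Dp (fun i h1 h2 => Hc k i (le_refl k) (by omega) h2)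
    have hbr := Hb k (le_refl k) (by omega)
    calc Dp b k M * b (k + 1)
        = Dp b (k+2) M * (b (k+1) * b k * b (k+1)) := by rw [e1]; group
      _ = Dp b (k+2) M * (b k * b (k+1) * b k) := by rw [hbr]
      _ = (b k * Dp b (k+2) M) * (b (k+1) * b k) := by
            rw [show Dp b (k+2) M * (b k * b (k+1) * b k)
              = (Dp b (k+2) M * b k) * (b (k+1) * b k) from by group, ← hcomm.eq]
      _ = b k * Dp b k M := by rw [e1]; group
  | succ d IH =>
    intro k Hb Hc h
    show Dp b k M * b (k + d + 2) = b (k + d + 1) * Dp b k M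
    have e1 : Dp b k M = Dp b (k+1) M * b k := Dp_bot b (by omega)
    have hcomm := Hc k (k + d + 2) (le_refl k) (by omega) (by omega)
    have IH' := IH (k+1) (fun i h1 h2 => Hb i (by omega) h2)
      (fun i j h1 h2 h3 => Hc i j (by omega) h2 h3) (by omega)
    rw [show k+1+d+1 = k+d+2 from by omega, show k+1+d = k+d+1 from by omega] at IH'
    calc Dp b k M * b (k + d + 2)
        = Dp b (k+1) M * (b k * b (k + d + 2)) := by rw [e1]; group
      _ = Dp b (k+1) M * (b (k + d + 2) * b k) := by rw [hcomm.eq]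
      _ = (Dp b (k+1) M * b (k + d + 2)) * b k := by group
      _ = (b (k + d + 1) * Dp b (k+1) M) * b k := by rw [IH']
      _ = b (k + d + 1) * Dp b k M := by rw [e1]; group

/-- Chain conjugation. -/
lemma chain_conj (b : ℕ → G) :
    ∀ m k, k ≤ m + 1 →
    (∀ i, k ≤ i → i ≤ m → b (i+1) * b i * b (i+1) = b i * b (i+1) * b i) →
    (∀ i j, k ≤ i → i + 2 ≤ j → j ≤ m + 1 → Commute (b i) (b j)) →
    b (m+1) * Dp b k m = Dp b k m * (Dp b (k+1) (m+1) * b k * (Dp b (k+1) (m+1))⁻¹) := by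
  intro m
  induction m using Nat.strong_induction_on with
  | _ m IH =>
    intro k hk Hb Hc
    rcases Nat.lt_or_ge m k with hmk | hkm
    · have hk1 : k = m + 1 := by omega
      rw [Dp_empty b (by omega), Dp_empty b (by omega), hk1]
      group
    rcases Nat.eq_or_lt_of_le hkm with heq | hlt
    · -- k = m
      subst heq
      rw [Dp_single]
      rw [show Dp b (k+1) (k+1) = b (k+1) from Dp_single b (k+1)]
      have hbr := Hb k (le_refl k) (le_refl k)
      rw [show b k * (b (k+1) * b k * (b (k+1))⁻¹) = (b k * b (k+1) * b k) * (b (k+1))⁻¹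
        from by group, ← hbr]
      group
    · -- k < m
      have e1 : Dp b k m = b m * Dp b k (m-1) := Dp_top b (by omega) (by omega)
      have e2 : Dp b (k+1) (m+1) = b (m+1) * Dp b (k+1) m := Dp_top' b (by omega)
      have IH' := IH (m-1) (by omega) k (by omega)
        (fun i h1 h2 => Hb i h1 (by omega))
        (fun i j h1 h2 h3 => Hc i j h1 h2 (by omega))
      rw [show m - 1 + 1 = m from by omega] at IH'
      -- IH' : b m * Dp b k (m-1) = Dp b k (m-1) * (Dp b (k+1) m * b k * (Dp b (k+1) m)⁻¹)
      have hbr := Hb m (by omega) (le_refl m)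
      have hcm : Commute (b (m+1)) (Dp b k (m-1)) :=
        commute_Dp (fun i h1 h2 => (Hc i (m+1) h1 (by omega) (by omega)).symm)
      have step1 : b (m+1) * b m = b m * b (m+1) * b m * (b (m+1))⁻¹ := by
        rw [← hbr]; group
      calc b (m+1) * Dp b k m
          = (b (m+1) * b m) * Dp b k (m-1) := by rw [e1]; group
        _ = (b m * b (m+1) * b m * (b (m+1))⁻¹) * Dp b k (m-1) := by rw [step1]
        _ = b m * b (m+1) * b m * ((b (m+1))⁻¹ * Dp b k (m-1)) := by group
        _ = b m * b (m+1) * b m * (Dp b k (m-1) * (b (m+1))⁻¹) := by rw [hcm.inv_left.eq]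
        _ = b m * b (m+1) * (b m * Dp b k (m-1)) * (b (m+1))⁻¹ := by group
        _ = b m * b (m+1) * (Dp b k (m-1) * (Dp b (k+1) m * b k * (Dp b (k+1) m)⁻¹))
              * (b (m+1))⁻¹ := by rw [IH']
        _ = b m * (b (m+1) * Dp b k (m-1)) * ((Dp b (k+1) m * b k * (Dp b (k+1) m)⁻¹)
              * (b (m+1))⁻¹) := by group
        _ = b m * (Dp b k (m-1) * b (m+1)) * ((Dp b (k+1) m * b k * (Dp b (k+1) m)⁻¹)
              * (b (m+1))⁻¹) := by rw [hcm.eq]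
        _ = (b m * Dp b k (m-1)) *
              ((b (m+1) * Dp b (k+1) m) * b k * (b (m+1) * Dp b (k+1) m)⁻¹) := by group
        _ = Dp b k m * (Dp b (k+1) (m+1) * b k * (Dp b (k+1) (m+1))⁻¹) := by rw [← e1, ← e2]


lemma braid_conj (c x y : G) (h : x*y*x = y*x*y) :
    (c*x*c⁻¹)*(c*y*c⁻¹)*(c*x*c⁻¹) = (c*y*c⁻¹)*(c*x*c⁻¹)*(c*y*c⁻¹) := by
  rw [show (c*x*c⁻¹)*(c*y*c⁻¹)*(c*x*c⁻¹) = c*(x*y*x)*c⁻¹ from by group, h]; group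

end Stmt4Aux

namespace Stmt4

open Stmt4Aux

lemma rel_one {α : Type} {rels : Set (FreeGroup α)} {r : FreeGroup α} (h : r ∈ rels) :
    PresentedGroup.mk rels r = 1 := by
  rw [PresentedGroup.mk_eq_one_iff]
  exact Subgroup.subset_normalClosure h

lemma braid_of_mem {α : Type} {rels : Set (FreeGroup α)} {x y : α}
    (h : braidRel (.of x) (.of y) ∈ rels) :
    (PresentedGroup.of x : PresentedGroup rels) * PresentedGroup.of y * PresentedGroup.of x
      = PresentedGroup.of y * PresentedGroup.of x * PresentedGroup.of y := by
  have h1 := rel_one h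
  unfold braidRel at h1
  rw [map_mul, map_mul, map_mul, map_inv, map_mul, map_mul, mul_inv_eq_one] at h1
  exact h1

lemma comm_of_mem {α : Type} {rels : Set (FreeGroup α)} {x y : α}
    (h : commRel (.of x) (.of y) ∈ rels) :
    Commute (PresentedGroup.of x : PresentedGroup rels) (PresentedGroup.of y) := by
  have h1 := rel_one h
  unfold commRel at h1
  rw [map_mul, map_mul, map_inv, map_mul, mul_inv_eq_one] at h1
  exact h1


section ARels
variable {n : ℕ} (hn : 3 ≤ n)

lemma a_of {i : ℕ} (h1 : 1 ≤ i) (h2 : i ≤ n) :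
    a n i = PresentedGroup.of (⟨i - 1, by omega⟩ : Fin n) := by
  unfold a
  rw [dif_pos (show 0 < n by omega)]
  congr 1
  exact Fin.ext (Nat.mod_eq_of_lt (by omega))

include hn

lemma braid_a {i : ℕ} (h1 : 1 ≤ i) (h2 : i + 1 ≤ n) :
    a n i * a n (i+1) * a n i = a n (i+1) * a n i * a n (i+1) := by
  have e1 : a n i = PresentedGroup.of (⟨i - 1, by omega⟩ : Fin n) := a_of h1 (by omega)
  have e2 : a n (i+1) = PresentedGroup.of (⟨i, by omega⟩ : Fin n) := a_of (by omega) h2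
  have hm : braidRel (.of (⟨i - 1, by omega⟩ : Fin n)) (.of (⟨i, by omega⟩ : Fin n))
      ∈ AtildeRels n := by
    refine ⟨_, _, Or.inl ⟨?_, rfl⟩⟩
    show i = (i - 1 + 1) % n
    rw [Nat.sub_add_cancel h1, Nat.mod_eq_of_lt (by omega)]
  rw [e1, e2]
  exact braid_of_mem hm

lemma braid_an1 : a n n * a n 1 * a n n = a n 1 * a n n * a n 1 := by
  have e1 : a n n = PresentedGroup.of (⟨n - 1, by omega⟩ : Fin n) := a_of (by omega) (le_refl n)
  have e2 : a n 1 = PresentedGroup.of (⟨0, by omega⟩ : Fin n) := by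
    rw [a_of (le_refl 1) (by omega)]
  have hm : braidRel (.of (⟨n - 1, by omega⟩ : Fin n)) (.of (⟨0, by omega⟩ : Fin n))
      ∈ AtildeRels n := by
    refine ⟨_, _, Or.inl ⟨?_, rfl⟩⟩
    show (0 : ℕ) = (n - 1 + 1) % n
    rw [Nat.sub_add_cancel (by omega), Nat.mod_self]
  rw [e1, e2]
  exact braid_of_mem hm

lemma comm_a {i j : ℕ} (h1 : 1 ≤ i) (h2 : i + 2 ≤ j) (h3 : j ≤ n) (h4 : ¬(i = 1 ∧ j = n)) :
    Commute (a n i) (a n j) := by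
  have e1 : a n i = PresentedGroup.of (⟨i - 1, by omega⟩ : Fin n) := a_of h1 (by omega)
  have e2 : a n j = PresentedGroup.of (⟨j - 1, by omega⟩ : Fin n) := a_of (by omega) h3
  have hm : commRel (.of (⟨i - 1, by omega⟩ : Fin n)) (.of (⟨j - 1, by omega⟩ : Fin n))
      ∈ AtildeRels n := by
    refine ⟨_, _, Or.inr ⟨Fin.ne_of_val_ne (show i - 1 ≠ j - 1 by omega), ?_, ?_, rfl⟩⟩
    · show (j - 1 : ℕ) ≠ (i - 1 + 1) % n
      rw [Nat.sub_add_cancel h1, Nat.mod_eq_of_lt (by omega)]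
      omega
    · show (i - 1 : ℕ) ≠ (j - 1 + 1) % n
      rw [Nat.sub_add_cancel (by omega)]
      rcases Nat.eq_or_lt_of_le h3 with rfl | hlt
      · rw [Nat.mod_self]; omega
      · rw [Nat.mod_eq_of_lt hlt]; omega
  rw [e1, e2]
  exact comm_of_mem hm

end ARels

section URels
variable {n : ℕ} (hn : 3 ≤ n)

lemma u_of {i : ℕ} (h1 : 1 ≤ i) (h2 : i ≤ n) :
    u n i = PresentedGroup.of (⟨i - 1, by omega⟩ : Fin n) := by
  unfold u
  rw [dif_pos (show 0 < n by omega)]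
  congr 1
  exact Fin.ext (Nat.mod_eq_of_lt (by omega))

include hn

lemma braid_u13 : u n 1 * u n 3 * u n 1 = u n 3 * u n 1 * u n 3 := by
  have e1 : u n 1 = PresentedGroup.of (⟨0, by omega⟩ : Fin n) := u_of (le_refl 1) (by omega)
  have e2 : u n 3 = PresentedGroup.of (⟨2, by omega⟩ : Fin n) := u_of (by omega) hn
  have hm : braidRel (.of (⟨0, by omega⟩ : Fin n)) (.of (⟨2, by omega⟩ : Fin n))
      ∈ DnRels n := ⟨_, _, Or.inl ⟨⟨rfl, rfl⟩, rfl⟩⟩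
  rw [e1, e2]
  exact braid_of_mem hm

lemma braid_u {i : ℕ} (h1 : 2 ≤ i) (h2 : i + 1 ≤ n) :
    u n i * u n (i+1) * u n i = u n (i+1) * u n i * u n (i+1) := by
  have e1 : u n i = PresentedGroup.of (⟨i - 1, by omega⟩ : Fin n) := u_of (by omega) (by omega)
  have e2 : u n (i+1) = PresentedGroup.of (⟨i, by omega⟩ : Fin n) := u_of (by omega) h2
  have hm : braidRel (.of (⟨i - 1, by omega⟩ : Fin n)) (.of (⟨i, by omega⟩ : Fin n))
      ∈ DnRels n := by
    refine ⟨_, _, Or.inr (Or.inl ⟨⟨by simp; omega, by simp; omega⟩, rfl⟩)⟩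
  rw [e1, e2]
  exact braid_of_mem hm

omit hn in
lemma comm_u {i j : ℕ} (h1 : 1 ≤ i) (h2 : i < j) (h3 : j ≤ n)
    (h4 : ¬(i = 1 ∧ j = 3)) (h5 : ¬(2 ≤ i ∧ j = i + 1)) :
    Commute (u n i) (u n j) := by
  have e1 : u n i = PresentedGroup.of (⟨i - 1, by omega⟩ : Fin n) := u_of h1 (by omega)
  have e2 : u n j = PresentedGroup.of (⟨j - 1, by omega⟩ : Fin n) := u_of (by omega) h3
  have hm : commRel (.of (⟨i - 1, by omega⟩ : Fin n)) (.of (⟨j - 1, by omega⟩ : Fin n))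
      ∈ DnRels n := by
    refine ⟨_, _, Or.inr (Or.inr ⟨by simp; omega, by simp; omega, by simp; omega, rfl⟩)⟩
  rw [e1, e2]
  exact comm_of_mem hm

end URels

open Stmt4Aux

section QSide

variable (n : ℕ)

abbrev QG := Atilde n ⧸ Subgroup.normalClosure {cycleRelator n}

abbrev mkQ : Atilde n →* QG n := QuotientGroup.mk' _

abbrev AQ (i : ℕ) : QG n := mkQ n (a n i)

lemma mk_dprod (k m : ℕ) : mkQ n (dprod n k m) = Dp (AQ n) k m := by
  show mkQ n (Dp (a n) k m) = _
  rw [map_Dp]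

variable {n} (hn : 3 ≤ n)
include hn

lemma braidQ {i : ℕ} (h1 : 1 ≤ i) (h2 : i + 1 ≤ n) :
    AQ n i * AQ n (i+1) * AQ n i = AQ n (i+1) * AQ n i * AQ n (i+1) := by
  simpa only [map_mul] using congrArg (mkQ n) (braid_a hn h1 h2)

lemma braidQn1 : AQ n n * AQ n 1 * AQ n n = AQ n 1 * AQ n n * AQ n 1 := by
  simpa only [map_mul] using congrArg (mkQ n) (braid_an1 hn)

lemma commQ {i j : ℕ} (h1 : 1 ≤ i) (h2 : i + 2 ≤ j) (h3 : j ≤ n) (h4 : ¬(i = 1 ∧ j = n)) :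
    Commute (AQ n i) (AQ n j) :=
  (comm_a hn h1 h2 h3 h4).map (mkQ n)

lemma cycleQ :
    AQ n n * (Dp (AQ n) 3 (n-1) * AQ n 2 * AQ n 1) * Dp (AQ n) 3 n
      = Dp (AQ n) 3 (n-1) * AQ n 2 * AQ n 1 * (Dp (AQ n) 3 n * AQ n 2) := by
  have h0 : mkQ n (cycleRelator n) = 1 := by
    rw [show mkQ n (cycleRelator n) = QuotientGroup.mk (cycleRelator n) from rfl,
      QuotientGroup.eq_one_iff]
    exact Subgroup.subset_normalClosure rfl
  replace h0 : mkQ n ((dprod n 1 n * dprod n 3 n) * (dprod n 1 (n - 1) * dprod n 2 n)⁻¹) = 1 := h0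
  rw [map_mul, map_inv, map_mul, map_mul, mul_inv_eq_one] at h0
  rw [mk_dprod, mk_dprod, mk_dprod, mk_dprod] at h0
  have d1 : Dp (AQ n) 1 n = AQ n n * Dp (AQ n) 1 (n-1) := Dp_top _ (by omega) (by omega)
  have d2 : Dp (AQ n) 1 (n-1) = Dp (AQ n) 3 (n-1) * AQ n 2 * AQ n 1 := by
    rw [Dp_bot (AQ n) (show 1 ≤ n - 1 by omega), Dp_bot (AQ n) (show 2 ≤ n - 1 by omega)]
  have d3 : Dp (AQ n) 2 n = Dp (AQ n) 3 n * AQ n 2 := Dp_bot _ (by omega)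
  rw [d1, d2, d3] at h0
  rw [show AQ n n * (Dp (AQ n) 3 (n-1) * AQ n 2 * AQ n 1) * Dp (AQ n) 3 n
    = AQ n n * (Dp (AQ n) 3 (n-1) * AQ n 2 * AQ n 1) * Dp (AQ n) 3 n from rfl]
  exact h0

/-- `A_n * q = q * z` where `q = a_{n-1}⋯a_3`, `z = v a_3 v⁻¹`, `v = a_n ⋯ a_4`. -/
lemma factD1 :
    AQ n n * Dp (AQ n) 3 (n-1)
      = Dp (AQ n) 3 (n-1) * (Dp (AQ n) 4 n * AQ n 3 * (Dp (AQ n) 4 n)⁻¹) := by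
  have h := chain_conj (AQ n) (n-1) 3 (by omega)
    (fun i hi1 hi2 => (braidQ hn (by omega) (by omega)).symm)
    (fun i j hi1 hij hj => commQ hn (by omega) hij (by omega) (by omega))
  rwa [show n - 1 + 1 = n from by omega] at h

/-- `w * a_2 = a_2⁻¹ * z * a_2 * w`. -/
lemma factC1 :
    Dp (AQ n) 3 n * AQ n 2
      = (AQ n 2)⁻¹ * (Dp (AQ n) 4 n * AQ n 3 * (Dp (AQ n) 4 n)⁻¹) * AQ n 2
          * Dp (AQ n) 3 n := by
  have e1 : Dp (AQ n) 3 n = Dp (AQ n) 4 n * AQ n 3 := Dp_bot _ hn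
  have hc : Commute (AQ n 2) (Dp (AQ n) 4 n) :=
    commute_Dp (fun i hi1 hi2 => commQ hn (by omega) (by omega) hi2 (by omega))
  have hbr : AQ n 2 * AQ n 3 * AQ n 2 = AQ n 3 * AQ n 2 * AQ n 3 := braidQ hn (by omega) hn
  calc Dp (AQ n) 3 n * AQ n 2
      = Dp (AQ n) 4 n * ((AQ n 2)⁻¹ * (AQ n 2 * AQ n 3 * AQ n 2)) := by rw [e1]; group
    _ = Dp (AQ n) 4 n * ((AQ n 2)⁻¹ * (AQ n 3 * AQ n 2 * AQ n 3)) := by rw [hbr]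
    _ = (Dp (AQ n) 4 n * (AQ n 2)⁻¹) * (AQ n 3 * AQ n 2 * AQ n 3) := by group
    _ = ((AQ n 2)⁻¹ * Dp (AQ n) 4 n) * (AQ n 3 * AQ n 2 * AQ n 3) := by
          rw [hc.inv_left.symm.eq]
    _ = (AQ n 2)⁻¹ * Dp (AQ n) 4 n * AQ n 3 * (Dp (AQ n) 4 n)⁻¹
          * (Dp (AQ n) 4 n * AQ n 2) * AQ n 3 := by group
    _ = (AQ n 2)⁻¹ * Dp (AQ n) 4 n * AQ n 3 * (Dp (AQ n) 4 n)⁻¹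
          * (AQ n 2 * Dp (AQ n) 4 n) * AQ n 3 := by rw [hc.symm.eq]
    _ = (AQ n 2)⁻¹ * (Dp (AQ n) 4 n * AQ n 3 * (Dp (AQ n) 4 n)⁻¹) * AQ n 2
          * (Dp (AQ n) 4 n * AQ n 3) := by group
    _ = (AQ n 2)⁻¹ * (Dp (AQ n) 4 n * AQ n 3 * (Dp (AQ n) 4 n)⁻¹) * AQ n 2
          * Dp (AQ n) 3 n := by rw [← e1]

/-- `w * a_m = a_{m-1} * w` for `4 ≤ m ≤ n`. -/
lemma factShift {m : ℕ} (h4 : 4 ≤ m) (hm : m ≤ n) :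
    Dp (AQ n) 3 n * AQ n m = AQ n (m-1) * Dp (AQ n) 3 n := by
  have h := chain_shift (AQ n) n (m-4) 3
    (fun i hi1 hi2 => (braidQ hn (by omega) (by omega)).symm)
    (fun i j hi1 hij hj => commQ hn (by omega) hij hj (by omega))
    (by omega)
  rwa [show 3 + (m-4) + 1 = m from by omega, show 3 + (m-4) = m - 1 from by omega] at h

/-- `t` commutes with `a_m` for `4 ≤ m ≤ n`. -/
lemma tAm {m : ℕ} (h4 : 4 ≤ m) (hm : m ≤ n) :
    ((Dp (AQ n) 3 n)⁻¹ * AQ n 1 * Dp (AQ n) 3 n) * AQ n m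
      = AQ n m * ((Dp (AQ n) 3 n)⁻¹ * AQ n 1 * Dp (AQ n) 3 n) := by
  have hs := factShift hn h4 hm
  have hc1 : Commute (AQ n 1) (AQ n (m-1)) := commQ hn (by omega) (by omega) (by omega) (by omega)
  have hfix : (Dp (AQ n) 3 n)⁻¹ * AQ n (m-1) * Dp (AQ n) 3 n = AQ n m := by
    rw [show (Dp (AQ n) 3 n)⁻¹ * AQ n (m-1) * Dp (AQ n) 3 n
      = (Dp (AQ n) 3 n)⁻¹ * (AQ n (m-1) * Dp (AQ n) 3 n) from by group, ← hs]
    group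
  calc ((Dp (AQ n) 3 n)⁻¹ * AQ n 1 * Dp (AQ n) 3 n) * AQ n m
      = (Dp (AQ n) 3 n)⁻¹ * AQ n 1 * (Dp (AQ n) 3 n * AQ n m) := by group
    _ = (Dp (AQ n) 3 n)⁻¹ * AQ n 1 * (AQ n (m-1) * Dp (AQ n) 3 n) := by rw [hs]
    _ = (Dp (AQ n) 3 n)⁻¹ * (AQ n 1 * AQ n (m-1)) * Dp (AQ n) 3 n := by group
    _ = (Dp (AQ n) 3 n)⁻¹ * (AQ n (m-1) * AQ n 1) * Dp (AQ n) 3 n := by rw [hc1.eq]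
    _ = ((Dp (AQ n) 3 n)⁻¹ * AQ n (m-1) * Dp (AQ n) 3 n)
          * ((Dp (AQ n) 3 n)⁻¹ * AQ n 1 * Dp (AQ n) 3 n) := by group
    _ = AQ n m * ((Dp (AQ n) 3 n)⁻¹ * AQ n 1 * Dp (AQ n) 3 n) := by rw [hfix]

/-- `t` commutes with `a_2` (this uses the cycle relation). -/
lemma tA2 :
    ((Dp (AQ n) 3 n)⁻¹ * AQ n 1 * Dp (AQ n) 3 n) * AQ n 2
      = AQ n 2 * ((Dp (AQ n) 3 n)⁻¹ * AQ n 1 * Dp (AQ n) 3 n) := by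
  have hD1 := factD1 hn
  have hC1 := factC1 hn
  have hcyc := cycleQ hn
  set W := Dp (AQ n) 3 n with hW
  set q := Dp (AQ n) 3 (n-1) with hq
  set Z := Dp (AQ n) 4 n * AQ n 3 * (Dp (AQ n) 4 n)⁻¹ with hZ
  -- main cancellation
  have h2 : q * (Z * (AQ n 2 * AQ n 1) * W) = q * ((AQ n 2 * AQ n 1) * ((AQ n 2)⁻¹ * Z * AQ n 2) * W) := by
    calc q * (Z * (AQ n 2 * AQ n 1) * W)
        = (q * Z) * (AQ n 2 * AQ n 1 * W) := by group
      _ = (AQ n n * q) * (AQ n 2 * AQ n 1 * W) := by rw [hD1]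
      _ = AQ n n * (q * AQ n 2 * AQ n 1) * W := by group
      _ = q * AQ n 2 * AQ n 1 * (W * AQ n 2) := hcyc
      _ = q * AQ n 2 * AQ n 1 * ((AQ n 2)⁻¹ * Z * AQ n 2 * W) := by rw [hC1]
      _ = q * ((AQ n 2 * AQ n 1) * ((AQ n 2)⁻¹ * Z * AQ n 2) * W) := by group
  have h3 : Z * (AQ n 2 * AQ n 1) = (AQ n 2 * AQ n 1) * ((AQ n 2)⁻¹ * Z * AQ n 2) :=
    mul_right_cancel (mul_left_cancel h2)
  have comm1z : AQ n 1 * ((AQ n 2)⁻¹ * Z * AQ n 2) = ((AQ n 2)⁻¹ * Z * AQ n 2) * AQ n 1 := by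
    rw [show ((AQ n 2)⁻¹ * Z * AQ n 2) * AQ n 1 = (AQ n 2)⁻¹ * (Z * (AQ n 2 * AQ n 1)) from by group,
      h3]
    group
  have eA2W : W⁻¹ * ((AQ n 2)⁻¹ * Z * AQ n 2) * W = AQ n 2 := by
    rw [show (AQ n 2)⁻¹ * Z * AQ n 2 = ((AQ n 2)⁻¹ * Z * AQ n 2 * W) * W⁻¹ from by group, ← hC1]
    group
  calc (W⁻¹ * AQ n 1 * W) * AQ n 2
      = W⁻¹ * AQ n 1 * (W * AQ n 2) := by group
    _ = W⁻¹ * AQ n 1 * ((AQ n 2)⁻¹ * Z * AQ n 2 * W) := by rw [hC1]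
    _ = W⁻¹ * (AQ n 1 * ((AQ n 2)⁻¹ * Z * AQ n 2)) * W := by group
    _ = W⁻¹ * (((AQ n 2)⁻¹ * Z * AQ n 2) * AQ n 1) * W := by rw [comm1z]
    _ = (W⁻¹ * ((AQ n 2)⁻¹ * Z * AQ n 2) * W) * (W⁻¹ * AQ n 1 * W) := by group
    _ = AQ n 2 * (W⁻¹ * AQ n 1 * W) := by rw [eA2W]

/-- `t` braids with `a_3`. -/
lemma tA3 :
    ((Dp (AQ n) 3 n)⁻¹ * AQ n 1 * Dp (AQ n) 3 n) * AQ n 3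
        * ((Dp (AQ n) 3 n)⁻¹ * AQ n 1 * Dp (AQ n) 3 n)
      = AQ n 3 * ((Dp (AQ n) 3 n)⁻¹ * AQ n 1 * Dp (AQ n) 3 n) * AQ n 3 := by
  set V := Dp (AQ n) 4 n with hV
  set W := Dp (AQ n) 3 n with hW
  have e1 : W = V * AQ n 3 := Dp_bot _ hn
  -- braid (AQ n 1) (V * AQ n 3 * V⁻¹)
  have hz : AQ n 1 * (V * AQ n 3 * V⁻¹) * AQ n 1
      = (V * AQ n 3 * V⁻¹) * AQ n 1 * (V * AQ n 3 * V⁻¹) := by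
    rcases Nat.eq_or_lt_of_le hn with rfl | h4
    · -- n = 3
      have hVempty : V = 1 := by rw [hV]; exact Dp_empty _ (by omega)
      have hb := (braidQn1 hn).symm
      rw [hVempty]
      simpa only [one_mul, inv_one, mul_one] using hb
    · -- n ≥ 4
      have e2 : V = AQ n n * Dp (AQ n) 4 (n-1) := Dp_top _ (by omega) (by omega)
      have st1 : (AQ n n)⁻¹ * AQ n 1 * AQ n n = AQ n 1 * AQ n n * (AQ n 1)⁻¹ := by
        rw [show (AQ n n)⁻¹ * AQ n 1 * AQ n n
          = (AQ n n)⁻¹ * (AQ n 1 * AQ n n * AQ n 1) * (AQ n 1)⁻¹ from by group, ← braidQn1 hn]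
        group
      have hcomm1v : Commute (AQ n 1) (Dp (AQ n) 4 (n-1)) :=
        commute_Dp (fun i hi1 hi2 => commQ hn (by omega) (by omega) (by omega) (by omega))
      have hch : AQ n n * Dp (AQ n) 4 (n-1)
          = Dp (AQ n) 4 (n-1) * (Dp (AQ n) 5 n * AQ n 4 * (Dp (AQ n) 5 n)⁻¹) := by
        have h := chain_conj (AQ n) (n-1) 4 (by omega)
          (fun i hi1 hi2 => (braidQ hn (by omega) (by omega)).symm)
          (fun i j hi1 hij hj => commQ hn (by omega) hij (by omega) (by omega))
        rwa [show n - 1 + 1 = n from by omega] at h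
      set Z5 := Dp (AQ n) 5 n * AQ n 4 * (Dp (AQ n) 5 n)⁻¹ with hZ5
      have s4 : V⁻¹ * AQ n 1 * V = AQ n 1 * Z5 * (AQ n 1)⁻¹ := by
        calc V⁻¹ * AQ n 1 * V
            = (Dp (AQ n) 4 (n-1))⁻¹ * ((AQ n n)⁻¹ * AQ n 1 * AQ n n) * Dp (AQ n) 4 (n-1) := by
              rw [e2]; group
          _ = (Dp (AQ n) 4 (n-1))⁻¹ * (AQ n 1 * AQ n n * (AQ n 1)⁻¹) * Dp (AQ n) 4 (n-1) := by
              rw [st1]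
          _ = ((Dp (AQ n) 4 (n-1))⁻¹ * AQ n 1) * AQ n n * ((AQ n 1)⁻¹ * Dp (AQ n) 4 (n-1)) := by
              group
          _ = (AQ n 1 * (Dp (AQ n) 4 (n-1))⁻¹) * AQ n n * (Dp (AQ n) 4 (n-1) * (AQ n 1)⁻¹) := by
              rw [show (Dp (AQ n) 4 (n-1))⁻¹ * AQ n 1 = AQ n 1 * (Dp (AQ n) 4 (n-1))⁻¹ from
                  hcomm1v.inv_right.eq.symm,
                hcomm1v.inv_left.eq]
          _ = AQ n 1 * ((Dp (AQ n) 4 (n-1))⁻¹ * (AQ n n * Dp (AQ n) 4 (n-1))) * (AQ n 1)⁻¹ := by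
              group
          _ = AQ n 1 * Z5 * (AQ n 1)⁻¹ := by rw [hch]; group
      have h34 : AQ n 4 * AQ n 3 * AQ n 4 = AQ n 3 * AQ n 4 * AQ n 3 :=
        (braidQ hn (by omega) (by omega)).symm
      have s2 := braid_conj (Dp (AQ n) 5 n) (AQ n 4) (AQ n 3) h34
      have comm35 : Commute (AQ n 3) (Dp (AQ n) 5 n) :=
        commute_Dp (fun i hi1 hi2 => commQ hn (by omega) (by omega) (by omega) (by omega))
      rw [show Dp (AQ n) 5 n * AQ n 3 * (Dp (AQ n) 5 n)⁻¹ = AQ n 3 from by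
        rw [comm35.symm.eq]; group] at s2
      have s3 := braid_conj (AQ n 1) Z5 (AQ n 3) s2
      have comm13 : Commute (AQ n 1) (AQ n 3) := commQ hn (by omega) (by omega) hn (by omega)
      rw [show AQ n 1 * AQ n 3 * (AQ n 1)⁻¹ = AQ n 3 from by rw [comm13.eq]; group] at s3
      rw [← s4] at s3
      have s6 := braid_conj V (V⁻¹ * AQ n 1 * V) (AQ n 3) s3
      rw [show V * (V⁻¹ * AQ n 1 * V) * V⁻¹ = AQ n 1 from by group] at s6
      exact s6
  have eA3 : AQ n 3 = W⁻¹ * (V * AQ n 3 * V⁻¹) * (W⁻¹)⁻¹ := by rw [inv_inv, e1]; group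
  have eT : W⁻¹ * AQ n 1 * W = W⁻¹ * AQ n 1 * (W⁻¹)⁻¹ := by rw [inv_inv]
  calc (W⁻¹ * AQ n 1 * W) * AQ n 3 * (W⁻¹ * AQ n 1 * W)
      = (W⁻¹ * AQ n 1 * (W⁻¹)⁻¹) * (W⁻¹ * (V * AQ n 3 * V⁻¹) * (W⁻¹)⁻¹)
          * (W⁻¹ * AQ n 1 * (W⁻¹)⁻¹) := by rw [← eA3, ← eT]
    _ = (W⁻¹ * (V * AQ n 3 * V⁻¹) * (W⁻¹)⁻¹) * (W⁻¹ * AQ n 1 * (W⁻¹)⁻¹)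
          * (W⁻¹ * (V * AQ n 3 * V⁻¹) * (W⁻¹)⁻¹) := braid_conj _ _ _ hz
    _ = AQ n 3 * (W⁻¹ * AQ n 1 * W) * AQ n 3 := by rw [← eA3, ← eT]

end QSide
section DSide

variable {n : ℕ} (hn : 3 ≤ n)
include hn

/-- chain conj in `D_n`: `u_n * (u_{n-1}⋯u_3) = (u_{n-1}⋯u_3) * (v u_3 v⁻¹)`. -/
lemma uchain3 :
    u n n * Dp (u n) 3 (n-1)
      = Dp (u n) 3 (n-1) * (Dp (u n) 4 n * u n 3 * (Dp (u n) 4 n)⁻¹) := by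
  have h := chain_conj (u n) (n-1) 3 (by omega)
    (fun i hi1 hi2 => (braid_u hn (by omega) (by omega)).symm)
    (fun i j hi1 hij hj => comm_u (by omega) (by omega) (by omega) (by omega) (by omega))
  rwa [show n - 1 + 1 = n from by omega] at h

lemma uchain2 :
    u n n * Dp (u n) 2 (n-1)
      = Dp (u n) 2 (n-1) * (Dp (u n) 3 n * u n 2 * (Dp (u n) 3 n)⁻¹) := by
  have h := chain_conj (u n) (n-1) 2 (by omega)
    (fun i hi1 hi2 => (braid_u hn (by omega) (by omega)).symm)
    (fun i j hi1 hij hj => comm_u (by omega) (by omega) (by omega) (by omega) (by omega))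
  rwa [show n - 1 + 1 = n from by omega] at h

/-- braid of `u_n` with `A_1 = V u_1 V⁻¹`. -/
lemma uBn1 :
    u n n * (Dp (u n) 3 n * u n 1 * (Dp (u n) 3 n)⁻¹) * u n n
      = (Dp (u n) 3 n * u n 1 * (Dp (u n) 3 n)⁻¹) * u n n
          * (Dp (u n) 3 n * u n 1 * (Dp (u n) 3 n)⁻¹) := by
  set V := Dp (u n) 3 n with hV
  have e2 : V = u n n * Dp (u n) 3 (n-1) := Dp_top _ (by omega) (by omega)
  have b3 : V⁻¹ * u n n * V = Dp (u n) 4 n * u n 3 * (Dp (u n) 4 n)⁻¹ := by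
    calc V⁻¹ * u n n * V
        = (Dp (u n) 3 (n-1))⁻¹ * (u n n * Dp (u n) 3 (n-1)) := by rw [e2]; group
      _ = (Dp (u n) 3 (n-1))⁻¹
            * (Dp (u n) 3 (n-1) * (Dp (u n) 4 n * u n 3 * (Dp (u n) 4 n)⁻¹)) := by
          rw [uchain3 hn]
      _ = Dp (u n) 4 n * u n 3 * (Dp (u n) 4 n)⁻¹ := by group
  have b5 : u n 3 * u n 1 * u n 3 = u n 1 * u n 3 * u n 1 := (braid_u13 hn).symm
  have b6 := braid_conj (Dp (u n) 4 n) (u n 3) (u n 1) b5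
  have comm1P : Commute (u n 1) (Dp (u n) 4 n) :=
    commute_Dp (fun i hi1 hi2 => comm_u (by omega) (by omega) (by omega) (by omega) (by omega))
  rw [show Dp (u n) 4 n * u n 1 * (Dp (u n) 4 n)⁻¹ = u n 1 from by
    rw [comm1P.symm.eq]; group] at b6
  rw [← b3] at b6
  have s6 := braid_conj V (V⁻¹ * u n n * V) (u n 1) b6
  rw [show V * (V⁻¹ * u n n * V) * V⁻¹ = u n n from by group] at s6
  exact s6

/-- braid of `A_1` with `u_2`. -/
lemma uB12 :
    (Dp (u n) 3 n * u n 1 * (Dp (u n) 3 n)⁻¹) * u n 2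
        * (Dp (u n) 3 n * u n 1 * (Dp (u n) 3 n)⁻¹)
      = u n 2 * (Dp (u n) 3 n * u n 1 * (Dp (u n) 3 n)⁻¹) * u n 2 := by
  set V := Dp (u n) 3 n with hV
  have e1 : V = Dp (u n) 4 n * u n 3 := Dp_bot _ hn
  have comm2P : Commute (u n 2) (Dp (u n) 4 n) :=
    commute_Dp (fun i hi1 hi2 => comm_u (by omega) (by omega) (by omega) (by omega) (by omega))
  have hbr23 : u n 2 * u n 3 * u n 2 = u n 3 * u n 2 * u n 3 := braid_u hn (le_refl 2) hn
  have c3 : V⁻¹ * u n 2 * V = u n 2 * u n 3 * (u n 2)⁻¹ := by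
    calc V⁻¹ * u n 2 * V
        = (u n 3)⁻¹ * ((Dp (u n) 4 n)⁻¹ * (u n 2 * Dp (u n) 4 n)) * u n 3 := by rw [e1]; group
      _ = (u n 3)⁻¹ * ((Dp (u n) 4 n)⁻¹ * (Dp (u n) 4 n * u n 2)) * u n 3 := by
          rw [comm2P.eq]
      _ = (u n 3)⁻¹ * (u n 2 * u n 3 * u n 2) * (u n 2)⁻¹ := by group
      _ = (u n 3)⁻¹ * (u n 3 * u n 2 * u n 3) * (u n 2)⁻¹ := by rw [hbr23]
      _ = u n 2 * u n 3 * (u n 2)⁻¹ := by group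
  have comm12 : Commute (u n 1) (u n 2) :=
    comm_u (le_refl 1) (by omega) (by omega) (by omega) (by omega)
  have c4 := braid_conj (u n 2) (u n 1) (u n 3) (braid_u13 hn)
  rw [show u n 2 * u n 1 * (u n 2)⁻¹ = u n 1 from by rw [← comm12.eq]; group] at c4
  rw [← c3] at c4
  have c6 := braid_conj V (u n 1) (V⁻¹ * u n 2 * V) c4
  rw [show V * (V⁻¹ * u n 2 * V) * V⁻¹ = u n 2 from by group] at c6
  exact c6

/-- `A_1` commutes with `u_j`, `3 ≤ j ≤ n-1`. -/
lemma uCj {j : ℕ} (h3 : 3 ≤ j) (hj : j + 1 ≤ n) :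
    (Dp (u n) 3 n * u n 1 * (Dp (u n) 3 n)⁻¹) * u n j
      = u n j * (Dp (u n) 3 n * u n 1 * (Dp (u n) 3 n)⁻¹) := by
  set V := Dp (u n) 3 n with hV
  have hs : V * u n (j+1) = u n j * V := by
    have h := chain_shift (u n) n (j-3) 3
      (fun i hi1 hi2 => (braid_u hn (by omega) (by omega)).symm)
      (fun i i' hi1 hii hj' => comm_u (by omega) (by omega) (by omega) (by omega) (by omega))
      (by omega)
    rwa [show 3 + (j-3) + 1 = j + 1 from by omega, show 3 + (j-3) = j from by omega] at h
  have comm1j : Commute (u n 1) (u n (j+1)) :=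
    comm_u (le_refl 1) (by omega) hj (by omega) (by omega)
  calc (V * u n 1 * V⁻¹) * u n j
      = V * u n 1 * (V⁻¹ * (u n j * V) * V⁻¹) := by group
    _ = V * u n 1 * (V⁻¹ * (V * u n (j+1)) * V⁻¹) := by rw [← hs]
    _ = V * (u n 1 * u n (j+1)) * V⁻¹ := by group
    _ = V * (u n (j+1) * u n 1) * V⁻¹ := by rw [comm1j.eq]
    _ = (V * u n (j+1)) * V⁻¹ * (V * u n 1 * V⁻¹) := by group
    _ = (u n j * V) * V⁻¹ * (V * u n 1 * V⁻¹) := by rw [hs]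
    _ = u n j * (V * u n 1 * V⁻¹) := by group

/-- the image of the cycle relation holds in `D_n`. -/
lemma uCyc :
    Dp (u n) 2 n * (Dp (u n) 3 n * u n 1 * (Dp (u n) 3 n)⁻¹) * Dp (u n) 3 n
      = Dp (u n) 2 (n-1) * (Dp (u n) 3 n * u n 1 * (Dp (u n) 3 n)⁻¹) * Dp (u n) 2 n := by
  set V := Dp (u n) 3 n with hV
  set Q2 := Dp (u n) 2 (n-1) with hQ2
  have e1 : Dp (u n) 2 n = V * u n 2 := Dp_bot _ (by omega)
  have e2 : Dp (u n) 2 n = u n n * Q2 := Dp_top _ (by omega) (by omega)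
  have comm12 : Commute (u n 1) (u n 2) :=
    comm_u (le_refl 1) (by omega) (by omega) (by omega) (by omega)
  have hL : Dp (u n) 2 n * (V * u n 1 * V⁻¹) * Dp (u n) 3 n = Q2 * (V * (u n 1 * u n 2)) := by
    calc Dp (u n) 2 n * (V * u n 1 * V⁻¹) * Dp (u n) 3 n
        = (u n n * Q2) * (V * u n 1 * V⁻¹) * V := by rw [e2]
      _ = (u n n * Q2) * (V * u n 1) := by group
      _ = (Q2 * (V * u n 2 * V⁻¹)) * (V * u n 1) := by rw [uchain2 hn]
      _ = Q2 * (V * (u n 2 * u n 1)) := by group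
      _ = Q2 * (V * (u n 1 * u n 2)) := by rw [comm12.symm.eq]
  have hR : Q2 * (V * u n 1 * V⁻¹) * Dp (u n) 2 n = Q2 * (V * (u n 1 * u n 2)) := by
    calc Q2 * (V * u n 1 * V⁻¹) * Dp (u n) 2 n
        = Q2 * (V * u n 1 * V⁻¹) * (V * u n 2) := by rw [e1]
      _ = Q2 * (V * (u n 1 * u n 2)) := by group
  rw [hL, hR]

end DSide

section Maps

variable (n : ℕ)

def fmap : Fin n → QG n := fun j =>
  if (j : ℕ) = 0 then mkQ n ((dprod n 3 n)⁻¹ * a n 1 * dprod n 3 n)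
  else mkQ n (a n ((j : ℕ) + 1))

def gmap : Fin n → ArtinD n := fun j =>
  if (j : ℕ) = 0 then Dp (u n) 3 n * u n 1 * (Dp (u n) 3 n)⁻¹
  else u n ((j : ℕ) + 1)

variable {n} (hn : 3 ≤ n)
include hn

lemma fmap_lift : ∀ r ∈ DnRels n, FreeGroup.lift (fmap n) r = 1 := by
  rintro r ⟨i, j, hr⟩
  rcases hr with ⟨⟨hi0, hj2⟩, rfl⟩ | ⟨⟨hi1, hj⟩, rfl⟩ | ⟨hij, hn02, hncons, rfl⟩
  · -- braid (u1, u3)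
    rw [braidRel]
    simp only [map_mul, map_inv, FreeGroup.lift_apply_of]
    rw [mul_inv_eq_one]
    simp only [fmap, hi0, hj2, if_pos, if_neg (by omega : ¬(2 : ℕ) = 0)]
    simp only [map_mul, map_inv, mk_dprod]
    exact tA3 hn
  · -- braid (u_{i+1}, u_{i+2})
    rw [braidRel]
    simp only [map_mul, map_inv, FreeGroup.lift_apply_of]
    rw [mul_inv_eq_one]
    have hjn : (j : ℕ) < n := j.isLt
    simp only [fmap, hj, if_neg (by omega : ¬(i : ℕ) = 0),
      if_neg (by omega : ¬(i : ℕ) + 1 = 0)]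
    exact braidQ hn (by omega) (by omega)
  · -- commutation
    rw [commRel]
    simp only [map_mul, map_inv, FreeGroup.lift_apply_of]
    rw [mul_inv_eq_one]
    have hjn : (j : ℕ) < n := j.isLt
    rcases Nat.eq_zero_or_pos (i : ℕ) with hi0 | hip
    · have hj1 : 1 ≤ (j : ℕ) := by omega
      rcases Nat.eq_or_lt_of_le hj1 with hj1' | hj2'
      · -- j = 1 : t commutes with a_2
        simp only [fmap, hi0, if_pos, if_neg (by omega : ¬(j : ℕ) = 0)]
        simp only [map_mul, map_inv, mk_dprod]
        rw [show (j : ℕ) + 1 = 2 from by omega]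
        exact tA2 hn
      · -- j ≥ 2, j ≠ 2 hence j ≥ 3
        have hj3 : 3 ≤ (j : ℕ) := by
          rcases Nat.eq_or_lt_of_le hj2' with h2 | h3
          · exact absurd ⟨hi0, h2.symm⟩ hn02
          · omega
        simp only [fmap, hi0, if_pos, if_neg (by omega : ¬(j : ℕ) = 0)]
        simp only [map_mul, map_inv, mk_dprod]
        exact tAm hn (by omega) (by omega)
    · -- 1 ≤ i < j
      have hij2 : (i : ℕ) + 2 ≤ (j : ℕ) := by
        rcases Nat.eq_or_lt_of_le (show (i:ℕ) + 1 ≤ (j:ℕ) from hij) with h1 | h2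
        · exact absurd ⟨hip, h1.symm⟩ hncons
        · omega
      simp only [fmap, if_neg (by omega : ¬(i : ℕ) = 0), if_neg (by omega : ¬(j : ℕ) = 0)]
      exact (commQ hn (by omega) (by omega) (by omega) (by omega)).eq

lemma gmap_lift : ∀ r ∈ AtildeRels n, FreeGroup.lift (gmap n) r = 1 := by
  rintro r ⟨i, j, hr⟩
  have hin : (i : ℕ) < n := i.isLt
  have hjn : (j : ℕ) < n := j.isLt
  rcases hr with ⟨hj, rfl⟩ | ⟨hne, hj1, hi1, rfl⟩
  · -- braid case
    rw [braidRel]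
    simp only [map_mul, map_inv, FreeGroup.lift_apply_of]
    rw [mul_inv_eq_one]
    rcases Nat.lt_or_ge (i : ℕ) (n - 1) with hilt | hige
    · have hjv : (j : ℕ) = (i : ℕ) + 1 := by
        rw [hj]; exact Nat.mod_eq_of_lt (by omega)
      rcases Nat.eq_zero_or_pos (i : ℕ) with hi0 | hip
      · -- braid (A1', u2)
        simp only [gmap, hi0, hjv, if_pos, if_neg (by omega : ¬(0 : ℕ) + 1 = 0)]
        rw [show (0 : ℕ) + 1 + 1 = 2 from by omega]
        exact uB12 hn
      · simp only [gmap, hjv, if_neg (by omega : ¬(i : ℕ) = 0),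
          if_neg (by omega : ¬(i : ℕ) + 1 = 0)]
        exact braid_u hn (by omega) (by omega)
    · -- i = n-1, j = 0 : braid (u_n, A1')
      have hiv : (i : ℕ) = n - 1 := by omega
      have hjv : (j : ℕ) = 0 := by
        rw [hj, show (i : ℕ) + 1 = n from by omega, Nat.mod_self]
      simp only [gmap, hjv, if_pos, if_neg (by omega : ¬(i : ℕ) = 0)]
      rw [show (i : ℕ) + 1 = n from by omega]
      exact uBn1 hn
  · -- commutation case
    rw [commRel]
    simp only [map_mul, map_inv, FreeGroup.lift_apply_of]
    rw [mul_inv_eq_one]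
    have hvne : (i : ℕ) ≠ (j : ℕ) := fun h => hne (Fin.ext h)
    rcases Nat.eq_zero_or_pos (i : ℕ) with hi0 | hip
    · -- i = 0
      have hjge2 : 2 ≤ (j : ℕ) := by
        have h1 : ((i : ℕ) + 1) % n = 1 := by rw [hi0]; exact Nat.mod_eq_of_lt (by omega)
        rw [h1] at hj1
        omega
      have hjle : (j : ℕ) ≤ n - 2 := by
        by_contra hcon
        have hjv : (j : ℕ) = n - 1 := by omega
        apply hi1
        rw [hi0, hjv, show n - 1 + 1 = n from by omega, Nat.mod_self]
      simp only [gmap, hi0, if_pos, if_neg (by omega : ¬(j : ℕ) = 0)]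
      exact uCj hn (by omega) (by omega)
    · rcases Nat.eq_zero_or_pos (j : ℕ) with hj0 | hjp
      · -- j = 0
        have hige2 : 2 ≤ (i : ℕ) := by
          have h1 : ((j : ℕ) + 1) % n = 1 := by rw [hj0]; exact Nat.mod_eq_of_lt (by omega)
          rw [h1] at hi1
          omega
        have hile : (i : ℕ) ≤ n - 2 := by
          by_contra hcon
          have hiv : (i : ℕ) = n - 1 := by omega
          apply hj1
          rw [hj0, hiv, show n - 1 + 1 = n from by omega, Nat.mod_self]
        simp only [gmap, hj0, if_pos, if_neg (by omega : ¬(i : ℕ) = 0)]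
        exact (uCj hn (by omega) (by omega)).symm
      · -- both ≥ 1
        rcases lt_trichotomy (i : ℕ) (j : ℕ) with hlt | heq | hgt
        · have hne' : (j : ℕ) ≠ (i : ℕ) + 1 := by
            intro h
            apply hj1
            rw [h]; exact (Nat.mod_eq_of_lt (by omega)).symm
          simp only [gmap, if_neg (by omega : ¬(i : ℕ) = 0), if_neg (by omega : ¬(j : ℕ) = 0)]
          exact (comm_u (by omega) (by omega) (by omega) (by omega) (by omega)).eq
        · exact absurd heq hvne
        · have hne' : (i : ℕ) ≠ (j : ℕ) + 1 := by
            intro h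
            apply hi1
            rw [h]; exact (Nat.mod_eq_of_lt (by omega)).symm
          simp only [gmap, if_neg (by omega : ¬(i : ℕ) = 0), if_neg (by omega : ¬(j : ℕ) = 0)]
          exact ((comm_u (by omega) (by omega) (by omega) (by omega) (by omega)).symm).eq

end Maps

section Assemble

variable {n : ℕ} (hn : 3 ≤ n)

def phiH : ArtinD n →* QG n := PresentedGroup.toGroup (fmap_lift hn)

def psi0H : Atilde n →* ArtinD n := PresentedGroup.toGroup (gmap_lift hn)

lemma phiH_u1 : phiH hn (u n 1) = mkQ n ((dprod n 3 n)⁻¹ * a n 1 * dprod n 3 n) := by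
  rw [u_of (le_refl 1) (by omega), phiH, PresentedGroup.toGroup.of]
  simp only [fmap]
  norm_num

lemma phiH_u {i : ℕ} (h2 : 2 ≤ i) (hi : i ≤ n) : phiH hn (u n i) = mkQ n (a n i) := by
  rw [u_of (by omega) hi, phiH, PresentedGroup.toGroup.of]
  simp only [fmap]
  rw [if_neg (by show ¬(i - 1 = 0); omega)]
  rw [show i - 1 + 1 = i from by omega]

lemma phiH_V : phiH hn (Dp (u n) 3 n) = mkQ n (dprod n 3 n) := by
  rw [map_Dp, show mkQ n (dprod n 3 n) = Dp (AQ n) 3 n from mk_dprod n 3 n]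
  exact Dp_congr (fun i h1 h2 => phiH_u hn (by omega) h2)

lemma psi0_a1 : psi0H hn (a n 1) = Dp (u n) 3 n * u n 1 * (Dp (u n) 3 n)⁻¹ := by
  rw [a_of (le_refl 1) (by omega), psi0H, PresentedGroup.toGroup.of]
  simp only [gmap]
  norm_num

lemma psi0_a {i : ℕ} (h2 : 2 ≤ i) (hi : i ≤ n) : psi0H hn (a n i) = u n i := by
  rw [a_of (by omega) hi, psi0H, PresentedGroup.toGroup.of]
  simp only [gmap]
  rw [if_neg (by show ¬(i - 1 = 0); omega)]
  rw [show i - 1 + 1 = i from by omega]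

lemma psi0_dprod {k m : ℕ} (hk : 2 ≤ k) (hm : m ≤ n) :
    psi0H hn (dprod n k m) = Dp (u n) k m := by
  show psi0H hn (Dp (a n) k m) = _
  rw [map_Dp]
  exact Dp_congr (fun i h1 h2 => psi0_a hn (by omega) (by omega))

lemma psi0_dprod1 {m : ℕ} (h2 : 2 ≤ m) (hm : m ≤ n) :
    psi0H hn (dprod n 1 m)
      = Dp (u n) 2 m * (Dp (u n) 3 n * u n 1 * (Dp (u n) 3 n)⁻¹) := by
  rw [show dprod n 1 m = dprod n 2 m * a n 1 from Dp_bot (a n) (by omega)]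
  rw [map_mul, psi0_dprod hn (le_refl 2) hm, psi0_a1 hn]

lemma psi0_cyc : psi0H hn (cycleRelator n) = 1 := by
  unfold cycleRelator
  rw [map_mul, map_inv, map_mul, map_mul, mul_inv_eq_one]
  rw [psi0_dprod1 hn (by omega) (le_refl n), psi0_dprod1 hn (by omega) (by omega),
    psi0_dprod hn (by omega) (le_refl n), psi0_dprod hn (by omega) (le_refl n)]
  exact uCyc hn

def psiH : QG n →* ArtinD n :=
  QuotientGroup.lift _ (psi0H hn) (by
    intro x hx
    refine Subgroup.normalClosure_le_normal (N := (psi0H hn).ker) ?_ hx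
    intro y hy
    rw [Set.mem_singleton_iff] at hy
    subst hy
    exact MonoidHom.mem_ker.mpr (psi0_cyc hn))

lemma psiH_mk (x : Atilde n) : psiH hn (mkQ n x) = psi0H hn x := rfl

lemma psi_phi_of (x : Fin n) : psiH hn (phiH hn (PresentedGroup.of x)) = PresentedGroup.of x := by
  rw [show phiH hn (PresentedGroup.of x) = fmap n x from PresentedGroup.toGroup.of _]
  by_cases hx : (x : ℕ) = 0
  · simp only [fmap, hx, if_pos]
    rw [psiH_mk, map_mul, map_mul, map_inv,
      psi0_dprod hn (by omega) (le_refl n), psi0_a1 hn]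
    rw [show PresentedGroup.of x = u n 1 from by
      rw [u_of (le_refl 1) (by omega)]
      exact congrArg PresentedGroup.of (Fin.ext (show (x:ℕ) = 1 - 1 by omega))]
    group
  · simp only [fmap, if_neg hx]
    rw [psiH_mk, psi0_a hn (by omega) (by omega)]
    rw [u_of (by omega) (by omega)]
    exact congrArg PresentedGroup.of (Fin.ext (show (x:ℕ) + 1 - 1 = (x:ℕ) by omega))

lemma phi_psi_of (x : Fin n) :
    phiH hn (psiH hn (mkQ n (PresentedGroup.of x))) = mkQ n (PresentedGroup.of x) := by
  rw [psiH_mk, show psi0H hn (PresentedGroup.of x) = gmap n x from PresentedGroup.toGroup.of _]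
  by_cases hx : (x : ℕ) = 0
  · simp only [gmap, hx, if_pos]
    rw [map_mul, map_mul, map_inv, phiH_V hn, phiH_u1 hn]
    rw [show mkQ n (dprod n 3 n) * mkQ n ((dprod n 3 n)⁻¹ * a n 1 * dprod n 3 n)
        * (mkQ n (dprod n 3 n))⁻¹ = mkQ n (a n 1) from by
      rw [map_mul, map_mul, map_inv]; group]
    rw [show (PresentedGroup.of x : Atilde n) = a n 1 from by
      rw [a_of (le_refl 1) (by omega)]
      exact congrArg PresentedGroup.of (Fin.ext (show (x:ℕ) = 1 - 1 by omega))]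
  · simp only [gmap, if_neg hx]
    rw [phiH_u hn (by omega) (by omega)]
    rw [show (PresentedGroup.of x : Atilde n) = a n ((x : ℕ) + 1) from by
      rw [a_of (by omega) (by omega)]
      exact congrArg PresentedGroup.of (Fin.ext (show (x:ℕ) = (x:ℕ) + 1 - 1 by omega))]

end Assemble

/-- For `n ≥ 3`, the quotient of `A(Ã_{n-1})` by the normal
closure of the cycle relator is isomorphic to `A(D_n)`, via the isomorphism
sending `u_1` to the class of `(a_n ⋯ a_3)⁻¹ · a_1 · (a_n ⋯ a_3)` and `u_i` to
the class of `a_i` for `2 ≤ i ≤ n`. -/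
theorem quotient_by_cycle_relation_iso_ArtinD (n : ℕ) (hn : 3 ≤ n) :
    ∃ φ : ArtinD n ≃* (Atilde n ⧸ Subgroup.normalClosure {cycleRelator n}),
      φ (u n 1) = QuotientGroup.mk ((dprod n 3 n)⁻¹ * a n 1 * dprod n 3 n) ∧
      ∀ i : ℕ, 2 ≤ i → i ≤ n → φ (u n i) = QuotientGroup.mk (a n i) := by

  have h1 : (psiH hn).comp (phiH hn) = MonoidHom.id (ArtinD n) := by
    apply PresentedGroup.ext
    intro x
    simpa using psi_phi_of hn x
  have h2 : (phiH hn).comp (psiH hn) = MonoidHom.id (QG n) := by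
    apply QuotientGroup.monoidHom_ext
    apply PresentedGroup.ext
    intro x
    simpa using phi_psi_of hn x
  refine ⟨MonoidHom.toMulEquiv (phiH hn) (psiH hn) h1 h2, ?_, ?_⟩
  · exact phiH_u1 hn
  · intro i hi2 hin
    exact phiH_u hn hi2 hin


end Stmt4
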